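/- Sinkhorn iteration convergence: let θ be a real n×n matrix, set S⁰ = exp(θ) (entrywise exponential, hence all entries strictly positive), and define S^{i+1} = N_c(N_r(S^i)), where N_r is row normalization and N_c is column normalization. Then the sequence (S^i) converges (entrywise) as i → ∞, and its limit is an n×n doubly stochastic matrix. -/

import Mathlib

open Matrix Finset Filter
set_option linter.unusedSectionVars false
set_option linter.unusedVariables false
set_option maxHeartbeats 1000000

/-- Row normalization: divide each entry by its row sum. -/
noncomputable def rowNorm {n : ℕ} (X : Matrix (Fin n) (Fin n) ℝ) : Matrix (Fin n) (Fin n) ℝ :=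
  Matrix.of fun i j => X i j / ∑ j', X i j'

/-- Column normalization: divide each entry by its column sum. -/
noncomputable def colNorm {n : ℕ} (X : Matrix (Fin n) (Fin n) ℝ) : Matrix (Fin n) (Fin n) ℝ :=
  Matrix.of fun i j => X i j / ∑ i', X i' j

/-- The Sinkhorn iteration: `S⁰ = exp θ` (entrywise) and `Sⁱ⁺¹ = N_c (N_r Sⁱ)`. -/
noncomputable def sinkhornSeq {n : ℕ} (θ : Matrix (Fin n) (Fin n) ℝ) :
    ℕ → Matrix (Fin n) (Fin n) ℝ
  | 0 => Matrix.of fun i j => Real.exp (θ i j)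
  | k + 1 => colNorm (rowNorm (sinkhornSeq θ k))

noncomputable section SinkAux
namespace SinkAux
variable {n : ℕ}

def mulv (B : Matrix (Fin n) (Fin n) ℝ) (v : Fin n → ℝ) : Fin n → ℝ := fun i => ∑ l, B i l * v l
def nx (B : Matrix (Fin n) (Fin n) ℝ) (v : Fin n → ℝ) : Fin n → ℝ := fun i => (mulv B v i)⁻¹
def FF (A : Matrix (Fin n) (Fin n) ℝ) (v : Fin n → ℝ) : Fin n → ℝ := nx Aᵀ (nx A v)
def vseq (A : Matrix (Fin n) (Fin n) ℝ) : ℕ → (Fin n → ℝ)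
  | 0 => fun _ => 1
  | (k+1) => FF A (vseq A k)
def Pos (v : Fin n → ℝ) : Prop := ∀ j, 0 < v j
def Sand (u v : Fin n → ℝ) (a b : ℝ) : Prop :=
  0 < a ∧ a ≤ b ∧ ∀ j, a * v j ≤ u j ∧ u j ≤ b * v j

variable [NeZero n]

def i0 : Fin n := Classical.arbitrary (Fin n)
def ainf (u v : Fin n → ℝ) : ℝ := univ.inf' univ_nonempty fun j => u j / v j
def asup (u v : Fin n → ℝ) : ℝ := univ.sup' univ_nonempty fun j => u j / v j
def ratm (u v : Fin n → ℝ) : ℝ := asup u v / ainf u v - 1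
def what (A : Matrix (Fin n) (Fin n) ℝ) (k : ℕ) : Fin n → ℝ :=
  fun j => vseq A k j / vseq A k i0

lemma mulv_pos {B : Matrix (Fin n) (Fin n) ℝ} {v : Fin n → ℝ}
    (hB : ∀ i j, 0 < B i j) (hv : Pos v) : Pos (mulv B v) := fun i =>
  Finset.sum_pos (fun l _ => mul_pos (hB i l) (hv l)) univ_nonempty

lemma nx_pos {B : Matrix (Fin n) (Fin n) ℝ} {v : Fin n → ℝ}
    (hB : ∀ i j, 0 < B i j) (hv : Pos v) : Pos (nx B v) := fun i =>
  inv_pos.mpr (mulv_pos hB hv i)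

lemma inv_le_inv_mul {x y K : ℝ} (hx : 0 < x) (hy : 0 < y) (h : y ≤ K * x) :
    x⁻¹ ≤ K * y⁻¹ := by
  rw [inv_eq_one_div, inv_eq_one_div, mul_one_div, div_le_div_iff₀ hx hy]
  linarith

/-- after one inverse-multiplication step, ratios are bounded by M/m. -/
lemma nx_ratio {B : Matrix (Fin n) (Fin n) ℝ} {v : Fin n → ℝ} {m M : ℝ}
    (hm : 0 < m) (hBl : ∀ i j, m ≤ B i j) (hBu : ∀ i j, B i j ≤ M) (hv : Pos v) :
    ∀ i i', nx B v i ≤ (M/m) * nx B v i' := by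
  intro i i'
  have hB : ∀ i j, 0 < B i j := fun i j => lt_of_lt_of_le hm (hBl i j)
  have hM : 0 < M := lt_of_lt_of_le hm ((hBl i i).trans (hBu i i))
  have h1 : mulv B v i' ≤ (M/m) * mulv B v i := by
    have hs : (0:ℝ) < ∑ l, v l := Finset.sum_pos (fun l _ => hv l) univ_nonempty
    have h2 : mulv B v i' ≤ M * ∑ l, v l := by
      rw [Finset.mul_sum]
      exact Finset.sum_le_sum fun l _ => mul_le_mul_of_nonneg_right (hBu i' l) (hv l).le
    have h3 : m * ∑ l, v l ≤ mulv B v i := by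
      rw [Finset.mul_sum]
      exact Finset.sum_le_sum fun l _ => mul_le_mul_of_nonneg_right (hBl i l) (hv l).le
    calc mulv B v i' ≤ M * ∑ l, v l := h2
      _ = (M/m) * (m * ∑ l, v l) := by field_simp
      _ ≤ (M/m) * mulv B v i := by
          apply mul_le_mul_of_nonneg_left h3
          positivity
  exact inv_le_inv_mul (mulv_pos hB hv i) (mulv_pos hB hv i') h1

/-- tight sandwich from inf'/sup'. -/
lemma tight_sand {u v : Fin n → ℝ} (hu : Pos u) (hv : Pos v) :
    Sand u v (ainf u v) (asup u v) ∧ (∃ j, u j = ainf u v * v j) ∧ (∃ j, u j = asup u v * v j) := by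
  obtain ⟨j₀, -, hj₀⟩ := Finset.exists_mem_eq_inf' (univ_nonempty) (fun j => u j / v j)
  obtain ⟨j₁, -, hj₁⟩ := Finset.exists_mem_eq_sup' (univ_nonempty) (fun j => u j / v j)
  have ha : ainf u v = u j₀ / v j₀ := hj₀
  have hb : asup u v = u j₁ / v j₁ := hj₁
  have hainf : 0 < ainf u v := by rw [ha]; exact div_pos (hu j₀) (hv j₀)
  have hle : ∀ j, ainf u v ≤ u j / v j := fun j => Finset.inf'_le (fun j => u j / v j) (mem_univ j)
  have hge : ∀ j, u j / v j ≤ asup u v := fun j => Finset.le_sup' (fun j => u j / v j) (mem_univ j)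
  refine ⟨⟨hainf, le_trans (hle j₀) (hge j₀), fun j => ?_⟩, ⟨j₀, ?_⟩, ⟨j₁, ?_⟩⟩
  · constructor
    · rw [← le_div_iff₀ (hv j)]; exact hle j
    · rw [← div_le_iff₀ (hv j)]; exact hge j
  · rw [ha, div_mul_cancel₀ _ (hv j₀).ne']
  · rw [hb, div_mul_cancel₀ _ (hv j₁).ne']

lemma ainf_pos {u v : Fin n → ℝ} (hu : Pos u) (hv : Pos v) : 0 < ainf u v :=
  (tight_sand hu hv).1.1

lemma ratm_nonneg {u v : Fin n → ℝ} (hu : Pos u) (hv : Pos v) : 0 ≤ ratm u v := by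
  have h := (tight_sand hu hv).1
  have := h.1
  have := h.2.1
  unfold ratm
  rw [sub_nonneg, le_div_iff₀ ‹0 < ainf u v›]
  linarith

/-- a (possibly loose) sandwich bounds inf'/sup'. -/
lemma sand_bounds {u v : Fin n → ℝ} {a b : ℝ} (hv : Pos v) (hS : Sand u v a b) :
    a ≤ ainf u v ∧ asup u v ≤ b := by
  constructor
  · apply Finset.le_inf'
    intro j _
    rw [le_div_iff₀ (hv j)]
    exact (hS.2.2 j).1
  · apply Finset.sup'_le
    intro j _
    rw [div_le_iff₀ (hv j)]
    exact (hS.2.2 j).2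

lemma sand_inv {u v : Fin n → ℝ} {a b : ℝ} (hu : Pos u) (hv : Pos v) (hS : Sand u v a b) :
    Sand (fun j => (u j)⁻¹) (fun j => (v j)⁻¹) b⁻¹ a⁻¹ := by
  obtain ⟨ha, hab, h⟩ := hS
  have hb : 0 < b := lt_of_lt_of_le ha hab
  refine ⟨inv_pos.mpr hb, inv_anti₀ ha hab, fun j => ?_⟩
  obtain ⟨h1, h2⟩ := h j
  constructor
  · have := one_div_le_one_div_of_le (hu j) h2
    rw [one_div, one_div, mul_inv] at this
    exact this
  · have := one_div_le_one_div_of_le (mul_pos ha (hv j)) h1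
    rw [one_div, one_div, mul_inv] at this
    exact this

/-- The key one-sided contraction estimate for multiplication by a positive matrix. -/
lemma mult_sand {B : Matrix (Fin n) (Fin n) ℝ} {u v : Fin n → ℝ} {m M a b : ℝ}
    (hm : 0 < m) (hBl : ∀ i j, m ≤ B i j) (hBu : ∀ i j, B i j ≤ M)
    (hu : Pos u) (hv : Pos v)
    (hK : ∀ j j', v j ≤ (M/m) * v j')
    (hS : Sand u v a b) (hea : ∃ j, u j = a * v j) (heb : ∃ j, u j = b * v j) :
    Sand (mulv B u) (mulv B v) (a + (m^2/(2*M^2*n)) * (b-a)) (b - (m^2/(2*M^2*n)) * (b-a)) := by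
  obtain ⟨ha, hab, hsand⟩ := hS
  obtain ⟨j₀, hj₀⟩ := hea
  obtain ⟨j₁, hj₁⟩ := heb
  have hM : 0 < M := lt_of_lt_of_le hm ((hBl j₀ j₀).trans (hBu j₀ j₀))
  have hn : 0 < (n:ℝ) := by exact_mod_cast Nat.pos_of_ne_zero (NeZero.ne n)
  set δ := m^2/(2*M^2*n) with hδ
  have hδpos : 0 < δ := by positivity
  have hδhalf : δ ≤ 1/2 := by
    rw [hδ, div_le_div_iff₀ (by positivity) (by norm_num)]
    have h1 : m^2 ≤ M^2 := by nlinarith [(hBl j₀ j₀).trans (hBu j₀ j₀)]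
    have h2 : (1:ℝ) ≤ (n:ℝ) := by exact_mod_cast Nat.one_le_iff_ne_zero.mpr (NeZero.ne n)
    nlinarith
  have hB : ∀ i j, 0 < B i j := fun i j => lt_of_lt_of_le hm (hBl i j)
  have key : ∀ i j, δ * mulv B v i ≤ B i j * v j := by
    intro i j
    have h1 : mulv B v i ≤ (n:ℝ) * (M * ((M/m) * v j)) := by
      calc mulv B v i ≤ ∑ _l : Fin n, M * ((M/m) * v j) := by
            apply Finset.sum_le_sum
            intro l _
            have := hK l j
            have hBil := hBu i l
            nlinarith [hv l, hB i l]
        _ = (n:ℝ) * (M * ((M/m) * v j)) := by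
            rw [Finset.sum_const, card_univ, Fintype.card_fin, nsmul_eq_mul]
    have h2 : δ * ((n:ℝ) * (M * ((M/m) * v j))) = (m/2) * v j := by
      rw [hδ]; field_simp
    calc δ * mulv B v i ≤ δ * ((n:ℝ) * (M * ((M/m) * v j))) :=
          mul_le_mul_of_nonneg_left h1 hδpos.le
      _ = (m/2) * v j := h2
      _ ≤ B i j * v j := by nlinarith [hv j, hBl i j]
  constructor
  · nlinarith [mul_nonneg hδpos.le (sub_nonneg.mpr hab)]
  constructor
  · nlinarith [mul_le_mul_of_nonneg_right hδhalf (sub_nonneg.mpr hab)]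
  intro i
  have hsplitu : mulv B u i = ∑ l ∈ univ.erase j₀, B i l * u l + B i j₀ * u j₀ :=
    (Finset.sum_erase_add _ _ (mem_univ j₀)).symm
  have hsplitu' : mulv B u i = ∑ l ∈ univ.erase j₁, B i l * u l + B i j₁ * u j₁ :=
    (Finset.sum_erase_add _ _ (mem_univ j₁)).symm
  have hsplitv : (∑ l ∈ univ.erase j₀, B i l * v l) = mulv B v i - B i j₀ * v j₀ := by
    have := Finset.sum_erase_add univ (fun l => B i l * v l) (mem_univ j₀)
    simp only [mulv] at *
    linarith
  have hsplitv' : (∑ l ∈ univ.erase j₁, B i l * v l) = mulv B v i - B i j₁ * v j₁ := by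
    have := Finset.sum_erase_add univ (fun l => B i l * v l) (mem_univ j₁)
    simp only [mulv] at *
    linarith
  constructor
  · have h1 : ∑ l ∈ univ.erase j₁, B i l * (a * v l) ≤ ∑ l ∈ univ.erase j₁, B i l * u l :=
      Finset.sum_le_sum fun l _ => mul_le_mul_of_nonneg_left (hsand l).1 (hB i l).le
    have h2 : ∑ l ∈ univ.erase j₁, B i l * (a * v l) = a * ∑ l ∈ univ.erase j₁, B i l * v l := by
      rw [Finset.mul_sum]; apply Finset.sum_congr rfl; intros; ring
    have hkey := key i j₁
    have hbma : 0 ≤ b - a := by linarith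
    have : a * (mulv B v i - B i j₁ * v j₁) + B i j₁ * (b * v j₁) ≤ mulv B u i := by
      rw [hsplitu', ← hj₁]
      have := h2 ▸ h1
      linarith [hsplitv' ▸ this]
    nlinarith [mul_le_mul_of_nonneg_left hkey hbma]
  · have h1 : ∑ l ∈ univ.erase j₀, B i l * u l ≤ ∑ l ∈ univ.erase j₀, B i l * (b * v l) :=
      Finset.sum_le_sum fun l _ => mul_le_mul_of_nonneg_left (hsand l).2 (hB i l).le
    have h2 : ∑ l ∈ univ.erase j₀, B i l * (b * v l) = b * ∑ l ∈ univ.erase j₀, B i l * v l := by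
      rw [Finset.mul_sum]; apply Finset.sum_congr rfl; intros; ring
    have hkey := key i j₀
    have hbma : 0 ≤ b - a := by linarith
    have : mulv B u i ≤ b * (mulv B v i - B i j₀ * v j₀) + B i j₀ * (a * v j₀) := by
      rw [hsplitu, ← hj₀]
      have := h2 ▸ h1
      linarith [hsplitv ▸ this]
    nlinarith [mul_le_mul_of_nonneg_left hkey hbma]

lemma contr_arith {a b δ : ℝ} (ha : 0 < a) (hab : a ≤ b) (hδ : 0 < δ) (hδ2 : δ ≤ 1/2) :
    (b - δ*(b-a))/(a + δ*(b-a)) - 1 ≤ (1-2*δ)*(b/a - 1) := by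
  have h1 : 0 < a + δ*(b-a) := by nlinarith
  have e1 : (b - δ*(b-a))/(a+δ*(b-a)) - 1 = ((1-2*δ)*(b-a))/(a+δ*(b-a)) := by
    field_simp
    ring
  have e2 : (1-2*δ)*(b/a - 1) = ((1-2*δ)*(b-a))/a := by
    field_simp
  rw [e1, e2, div_le_div_iff₀ h1 ha]
  nlinarith [mul_nonneg (mul_nonneg (by linarith : (0:ℝ) ≤ 1-2*δ) (by linarith : (0:ℝ) ≤ b-a)) (mul_nonneg hδ.le (by linarith : (0:ℝ) ≤ b-a))]

lemma step_ratm {A : Matrix (Fin n) (Fin n) ℝ} {u v : Fin n → ℝ} {m M : ℝ}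
    (hm : 0 < m) (hAl : ∀ i j, m ≤ A i j) (hAu : ∀ i j, A i j ≤ M)
    (hu : Pos u) (hv : Pos v) (hK : ∀ j j', v j ≤ (M/m) * v j') :
    ratm (FF A u) (FF A v) ≤ (1 - 2*(m^2/(2*M^2*n)))^2 * ratm u v := by
  have hA : ∀ i j, 0 < A i j := fun i j => lt_of_lt_of_le hm (hAl i j)
  have hAlT : ∀ i j, m ≤ Aᵀ i j := fun i j => hAl j i
  have hAuT : ∀ i j, Aᵀ i j ≤ M := fun i j => hAu j i
  have hAT : ∀ i j, 0 < Aᵀ i j := fun i j => hA j i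
  have hM : 0 < M := lt_of_lt_of_le hm ((hAl i0 i0).trans (hAu i0 i0))
  have hn1 : (1:ℝ) ≤ (n:ℝ) := by exact_mod_cast Nat.one_le_iff_ne_zero.mpr (NeZero.ne n)
  set δ := m^2/(2*M^2*n) with hδ
  have hδpos : 0 < δ := by positivity
  have hδhalf : δ ≤ 1/2 := by
    rw [hδ, div_le_div_iff₀ (by positivity) (by norm_num)]
    have h1 : m^2 ≤ M^2 := by nlinarith [(hAl i0 i0).trans (hAu i0 i0)]
    nlinarith
  obtain ⟨S0, ea0, eb0⟩ := tight_sand hu hv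
  have h1 := mult_sand hm hAl hAu hu hv hK S0 ea0 eb0
  set a := ainf u v with hadef
  set b := asup u v with hbdef
  set a1 := a + δ*(b-a) with ha1
  set b1 := b - δ*(b-a) with hb1
  have hpu1 : Pos (mulv A u) := mulv_pos hA hu
  have hpv1 : Pos (mulv A v) := mulv_pos hA hv
  have h2 : Sand (nx A u) (nx A v) b1⁻¹ a1⁻¹ := sand_inv hpu1 hpv1 h1
  have hpu2 : Pos (nx A u) := nx_pos hA hu
  have hpv2 : Pos (nx A v) := nx_pos hA hv
  obtain ⟨S2, ea2, eb2⟩ := tight_sand hpu2 hpv2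
  set a2 := ainf (nx A u) (nx A v) with ha2
  set b2 := asup (nx A u) (nx A v) with hb2
  have hbnds2 := sand_bounds hpv2 h2
  have hK2 : ∀ i i', nx A v i ≤ (M/m) * nx A v i' := nx_ratio hm hAl hAu hv
  have h4 := mult_sand hm hAlT hAuT hpu2 hpv2 hK2 S2 ea2 eb2
  set a3 := a2 + δ*(b2-a2) with ha3
  set b3 := b2 - δ*(b2-a2) with hb3
  have hpu3 : Pos (mulv Aᵀ (nx A u)) := mulv_pos hAT hpu2
  have hpv3 : Pos (mulv Aᵀ (nx A v)) := mulv_pos hAT hpv2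
  have h5 : Sand (FF A u) (FF A v) b3⁻¹ a3⁻¹ := sand_inv hpu3 hpv3 h4
  have hFu : Pos (FF A u) := nx_pos hAT hpu2
  have hFv : Pos (FF A v) := nx_pos hAT hpv2
  have h6 := sand_bounds hFv h5
  -- positivity facts
  have hapos : 0 < a := S0.1
  have hab : a ≤ b := S0.2.1
  have ha1pos : 0 < a1 := h1.1
  have hab1 : a1 ≤ b1 := h1.2.1
  have hb1pos : 0 < b1 := lt_of_lt_of_le ha1pos hab1
  have ha2pos : 0 < a2 := S2.1
  have hab2 : a2 ≤ b2 := S2.2.1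
  have ha3pos : 0 < a3 := h4.1
  have hab3 : a3 ≤ b3 := h4.2.1
  have hb3pos : 0 < b3 := lt_of_lt_of_le ha3pos hab3
  have hainfF : 0 < ainf (FF A u) (FF A v) := ainf_pos hFu hFv
  -- chain
  have step1 : ratm (FF A u) (FF A v) ≤ b3/a3 - 1 := by
    have hd : asup (FF A u) (FF A v) / ainf (FF A u) (FF A v) ≤ a3⁻¹ / b3⁻¹ :=
      div_le_div₀ (by positivity) h6.2 (by positivity) h6.1
    have he : a3⁻¹ / b3⁻¹ = b3/a3 := by
      field_simp
    unfold ratm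
    rw [← he]
    linarith
  have step2 : b3/a3 - 1 ≤ (1-2*δ)*(b2/a2 - 1) := contr_arith ha2pos hab2 hδpos hδhalf
  have step3 : b2/a2 - 1 ≤ b1/a1 - 1 := by
    have hd : b2/a2 ≤ a1⁻¹ / b1⁻¹ := div_le_div₀ (by positivity) hbnds2.2 (by positivity) hbnds2.1
    have he : a1⁻¹ / b1⁻¹ = b1/a1 := by field_simp
    rw [he] at hd
    linarith
  have step4 : b1/a1 - 1 ≤ (1-2*δ)*(b/a - 1) := contr_arith hapos hab hδpos hδhalf
  have hratm : ratm u v = b/a - 1 := rfl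
  have hlam : (0:ℝ) ≤ 1 - 2*δ := by linarith
  calc ratm (FF A u) (FF A v) ≤ b3/a3 - 1 := step1
    _ ≤ (1-2*δ)*(b2/a2 - 1) := step2
    _ ≤ (1-2*δ)*(b1/a1 - 1) := mul_le_mul_of_nonneg_left step3 hlam
    _ ≤ (1-2*δ)*((1-2*δ)*(b/a - 1)) := mul_le_mul_of_nonneg_left step4 hlam
    _ = (1-2*δ)^2 * ratm u v := by rw [hratm]; ring

lemma vseq_pos {A : Matrix (Fin n) (Fin n) ℝ} (hA : ∀ i j, 0 < A i j) :
    ∀ k, Pos (vseq A k)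
  | 0 => fun j => one_pos
  | (k+1) => nx_pos (fun i j => hA j i) (nx_pos hA (vseq_pos hA k))

lemma vseq_ratio {A : Matrix (Fin n) (Fin n) ℝ} {m M : ℝ}
    (hm : 0 < m) (hAl : ∀ i j, m ≤ A i j) (hAu : ∀ i j, A i j ≤ M) :
    ∀ k j j', vseq A k j ≤ (M/m) * vseq A k j' := by
  have hA : ∀ i j, 0 < A i j := fun i j => lt_of_lt_of_le hm (hAl i j)
  have hM : 0 < M := lt_of_lt_of_le hm ((hAl i0 i0).trans (hAu i0 i0))
  have hmM : m ≤ M := (hAl i0 i0).trans (hAu i0 i0)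
  intro k
  cases k with
  | zero =>
      intro j j'
      show (1:ℝ) ≤ (M/m) * 1
      rw [mul_one]
      rw [le_div_iff₀ hm]
      linarith
  | succ k =>
      exact nx_ratio hm (fun i j => hAl j i) (fun i j => hAu j i)
        (nx_pos hA (vseq_pos hA k))

lemma ratm_geom {A : Matrix (Fin n) (Fin n) ℝ} {m M : ℝ}
    (hm : 0 < m) (hAl : ∀ i j, m ≤ A i j) (hAu : ∀ i j, A i j ≤ M) :
    ∀ k, ratm (vseq A (k+1)) (vseq A k) ≤ (M/m - 1) * ((1 - 2*(m^2/(2*M^2*n)))^2)^k := by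
  have hA : ∀ i j, 0 < A i j := fun i j => lt_of_lt_of_le hm (hAl i j)
  have hM : 0 < M := lt_of_lt_of_le hm ((hAl i0 i0).trans (hAu i0 i0))
  have hn1 : (1:ℝ) ≤ (n:ℝ) := by exact_mod_cast Nat.one_le_iff_ne_zero.mpr (NeZero.ne n)
  have hmM : m ≤ M := (hAl i0 i0).trans (hAu i0 i0)
  set δ := m^2/(2*M^2*n) with hδ
  have hδpos : 0 < δ := by positivity
  have hδhalf : δ ≤ 1/2 := by
    rw [hδ, div_le_div_iff₀ (by positivity) (by norm_num)]
    nlinarith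
  have hlam0 : (0:ℝ) ≤ (1-2*δ)^2 := sq_nonneg _
  intro k
  induction k with
  | zero =>
      -- ratm (vseq A 1) (vseq A 0) ≤ M/m - 1
      have hv1 : Pos (vseq A 1) := vseq_pos hA 1
      have hv0 : Pos (vseq A 0) := vseq_pos hA 0
      obtain ⟨S, ⟨j₀, hj₀⟩, -⟩ := tight_sand hv1 hv0
      have ha : 0 < ainf (vseq A 1) (vseq A 0) := S.1
      have hsup : asup (vseq A 1) (vseq A 0) ≤ (M/m) * ainf (vseq A 1) (vseq A 0) := by
        apply Finset.sup'_le
        intro j _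
        have h0 : vseq A 0 j = 1 := rfl
        have h0' : vseq A 0 j₀ = 1 := rfl
        rw [h0, div_one]
        have := vseq_ratio hm hAl hAu 1 j j₀
        rw [h0', mul_one] at hj₀
        rw [← hj₀]
        exact this
      have : ratm (vseq A 1) (vseq A 0) ≤ M/m - 1 := by
        unfold ratm
        rw [sub_le_sub_iff_right, div_le_iff₀ ha]
        exact hsup
      simpa using this
  | succ k ih =>
      have hstep := step_ratm hm hAl hAu (vseq_pos hA (k+1)) (vseq_pos hA k)
        (vseq_ratio hm hAl hAu k)
      have : ratm (vseq A (k+2)) (vseq A (k+1)) ≤ (1-2*δ)^2 * ratm (vseq A (k+1)) (vseq A k) :=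
        hstep
      calc ratm (vseq A (k+2)) (vseq A (k+1))
          ≤ (1-2*δ)^2 * ratm (vseq A (k+1)) (vseq A k) := this
        _ ≤ (1-2*δ)^2 * ((M/m - 1) * ((1-2*δ)^2)^k) := mul_le_mul_of_nonneg_left (ih) hlam0
        _ = (M/m - 1) * ((1-2*δ)^2)^(k+1) := by ring

lemma what_pos {A : Matrix (Fin n) (Fin n) ℝ} (hA : ∀ i j, 0 < A i j) (k : ℕ) :
    Pos (what A k) := fun j => div_pos (vseq_pos hA k j) (vseq_pos hA k i0)

lemma what_scale {A : Matrix (Fin n) (Fin n) ℝ} (hA : ∀ i j, 0 < A i j) (k : ℕ) (l : Fin n) :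
    vseq A k l = vseq A k i0 * what A k l := by
  simp only [what]
  rw [mul_comm, div_mul_cancel₀ _ (vseq_pos hA k i0).ne']

lemma what_ub {A : Matrix (Fin n) (Fin n) ℝ} {m M : ℝ}
    (hm : 0 < m) (hAl : ∀ i j, m ≤ A i j) (hAu : ∀ i j, A i j ≤ M) (k : ℕ) (j : Fin n) :
    what A k j ≤ M/m := by
  have hA : ∀ i j, 0 < A i j := fun i j => lt_of_lt_of_le hm (hAl i j)
  have h := vseq_ratio hm hAl hAu k j i0
  simp only [what]
  rw [div_le_iff₀ (vseq_pos hA k i0)]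
  exact h

lemma what_lb {A : Matrix (Fin n) (Fin n) ℝ} {m M : ℝ}
    (hm : 0 < m) (hAl : ∀ i j, m ≤ A i j) (hAu : ∀ i j, A i j ≤ M) (k : ℕ) (j : Fin n) :
    m/M ≤ what A k j := by
  have hA : ∀ i j, 0 < A i j := fun i j => lt_of_lt_of_le hm (hAl i j)
  have hM : 0 < M := lt_of_lt_of_le hm ((hAl i0 i0).trans (hAu i0 i0))
  have h := vseq_ratio hm hAl hAu k i0 j
  have hvj := vseq_pos hA k j
  have hvi0 := vseq_pos hA k i0
  simp only [what]
  rw [div_le_div_iff₀ hM hvi0]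
  have h2 : m * ((M/m) * vseq A k j) = M * vseq A k j := by field_simp
  nlinarith [mul_le_mul_of_nonneg_left h hm.le]

lemma what_dist {A : Matrix (Fin n) (Fin n) ℝ} {m M : ℝ}
    (hm : 0 < m) (hAl : ∀ i j, m ≤ A i j) (hAu : ∀ i j, A i j ≤ M) (k : ℕ) (j : Fin n) :
    |what A (k+1) j - what A k j| ≤ (M/m) * ratm (vseq A (k+1)) (vseq A k) := by
  have hA : ∀ i j, 0 < A i j := fun i j => lt_of_lt_of_le hm (hAl i j)
  have hu := vseq_pos hA (k+1)
  have hv := vseq_pos hA k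
  obtain ⟨S, -, -⟩ := tight_sand hu hv
  set a := ainf (vseq A (k+1)) (vseq A k) with hadef
  set b := asup (vseq A (k+1)) (vseq A k) with hbdef
  have ha : 0 < a := S.1
  have hab : a ≤ b := S.2.1
  have hb : 0 < b := lt_of_lt_of_le ha hab
  have hup : what A (k+1) j ≤ (b/a) * what A k j := by
    have h1 : (b/a) * what A k j = (b * vseq A k j)/(a * vseq A k i0) := by
      simp only [what]; rw [div_mul_div_comm]
    rw [h1]
    simp only [what]
    exact div_le_div₀ (mul_pos hb (hv j)).le (S.2.2 j).2 (mul_pos ha (hv i0)) (S.2.2 i0).1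
  have hlo : (a/b) * what A k j ≤ what A (k+1) j := by
    have h1 : (a/b) * what A k j = (a * vseq A k j)/(b * vseq A k i0) := by
      simp only [what]; rw [div_mul_div_comm]
    rw [h1]
    simp only [what]
    exact div_le_div₀ (hu j).le (S.2.2 j).1 (hu i0) (S.2.2 i0).2
  have hwub : what A k j ≤ M/m := what_ub hm hAl hAu k j
  have hwpos : 0 < what A k j := what_pos hA k j
  have hba1 : 1 ≤ b/a := (one_le_div ha).mpr hab
  have hkey : 1 - a/b ≤ b/a - 1 := by
    have hd : b/a - 1 - (1 - a/b) = (b-a)^2/(a*b) := by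
      field_simp
    nlinarith [sq_nonneg (b-a), mul_pos ha hb, div_nonneg (sq_nonneg (b-a)) (mul_pos ha hb).le]
  have hr : ratm (vseq A (k+1)) (vseq A k) = b/a - 1 := rfl
  rw [hr, abs_sub_le_iff]
  constructor
  · have h2 : (b/a - 1) * what A k j ≤ (b/a - 1) * (M/m) :=
      mul_le_mul_of_nonneg_left hwub (by linarith)
    nlinarith
  · have h2 : (1 - a/b) * what A k j ≤ (b/a - 1) * what A k j :=
      mul_le_mul_of_nonneg_right hkey hwpos.le
    have h3 : (b/a - 1) * what A k j ≤ (b/a - 1) * (M/m) :=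
      mul_le_mul_of_nonneg_left hwub (by linarith)
    nlinarith

lemma step_matrix {A : Matrix (Fin n) (Fin n) ℝ} (hA : ∀ i j, 0 < A i j)
    {u v : Fin n → ℝ} (hu : Pos u) (hv : Pos v) :
    colNorm (rowNorm (Matrix.of fun i j => u i * A i j * v j)) =
      Matrix.of fun i j => nx A v i * A i j * FF A v j := by
  have hmv : Pos (mulv A v) := mulv_pos hA hv
  have ht : Pos (mulv Aᵀ (nx A v)) := mulv_pos (fun i j => hA j i) (nx_pos hA hv)
  ext i j
  simp only [colNorm, rowNorm, Matrix.of_apply]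
  have hrow : ∀ i', (∑ j', u i' * A i' j' * v j') = u i' * mulv A v i' := by
    intro i'
    simp only [mulv]
    rw [Finset.mul_sum]
    exact Finset.sum_congr rfl fun l _ => by ring
  simp only [hrow]
  have hcol : (∑ i', (u i' * A i' j * v j) / (u i' * mulv A v i')) = v j * mulv Aᵀ (nx A v) j := by
    have e : ∀ i', (u i' * A i' j * v j)/(u i' * mulv A v i') = v j * (A i' j * (mulv A v i')⁻¹) := by
      intro i'
      rw [div_eq_iff (mul_ne_zero (hu i').ne' (hmv i').ne')]
      linear_combination (-(u i' * A i' j * v j)) * mul_inv_cancel₀ (hmv i').ne'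
    simp only [e]
    rw [← Finset.mul_sum]
    congr 1
  rw [hcol]
  simp only [nx, FF]
  field_simp [(hu i).ne', (hv j).ne', (hmv i).ne', (ht j).ne']

lemma sink_eq {A θ : Matrix (Fin n) (Fin n) ℝ} (hA : A = Matrix.of fun i j => Real.exp (θ i j)) :
    ∀ k, sinkhornSeq θ (k+1) = Matrix.of fun i j => nx A (vseq A k) i * A i j * vseq A (k+1) j := by
  have hApos : ∀ i j, 0 < A i j := fun i j => by rw [hA]; exact Real.exp_pos _
  intro k
  induction k with
  | zero =>
    show colNorm (rowNorm (sinkhornSeq θ 0)) = _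
    have h0 : sinkhornSeq θ 0 =
        Matrix.of fun i j => (fun _ : Fin n => (1:ℝ)) i * A i j * (fun _ : Fin n => (1:ℝ)) j := by
      ext i j
      simp [sinkhornSeq, hA]
    rw [h0, step_matrix hApos (fun _ => one_pos) (fun _ => one_pos)]
    rfl
  | succ k ih =>
    show colNorm (rowNorm (sinkhornSeq θ (k+1))) = _
    rw [ih, step_matrix hApos (nx_pos hApos (vseq_pos hApos k)) (vseq_pos hApos (k+1))]
    rfl

lemma colsum_one {A : Matrix (Fin n) (Fin n) ℝ} (hA : ∀ i j, 0 < A i j) (k : ℕ) (j : Fin n) :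
    ∑ i, nx A (vseq A k) i * A i j * vseq A (k+1) j = 1 := by
  have h : vseq A (k+1) j = (mulv Aᵀ (nx A (vseq A k)) j)⁻¹ := rfl
  have ht : 0 < mulv Aᵀ (nx A (vseq A k)) j :=
    mulv_pos (fun i j => hA j i) (nx_pos hA (vseq_pos hA k)) j
  have e : ∑ i, nx A (vseq A k) i * A i j * vseq A (k+1) j
      = (∑ i, A i j * nx A (vseq A k) i) * vseq A (k+1) j := by
    rw [Finset.sum_mul]
    exact Finset.sum_congr rfl fun i _ => by ring
  rw [e]
  have e2 : (∑ i, A i j * nx A (vseq A k) i) = mulv Aᵀ (nx A (vseq A k)) j := by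
    simp [mulv, Matrix.transpose_apply]
  rw [e2, h, mul_inv_cancel₀ ht.ne']

lemma entry_eq {A : Matrix (Fin n) (Fin n) ℝ} (hA : ∀ i j, 0 < A i j) (k : ℕ) (i j : Fin n) :
    nx A (vseq A k) i * A i j * vseq A (k+1) j
      = (mulv Aᵀ (nx A (what A k)) i0)⁻¹ * (nx A (what A k) i * A i j * what A (k+1) j) := by
  have hvk := vseq_pos hA k
  have hw : Pos (what A k) := what_pos hA k
  have e2 : ∀ i', mulv A (vseq A k) i' = vseq A k i0 * mulv A (what A k) i' := by
    intro i'
    simp only [mulv]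
    rw [Finset.mul_sum]
    exact Finset.sum_congr rfl fun l _ => by rw [what_scale hA k l]; ring
  have e3 : ∀ i', nx A (vseq A k) i' = (vseq A k i0)⁻¹ * nx A (what A k) i' := by
    intro i'
    simp only [nx]
    rw [e2, mul_inv]
  have e4 : mulv Aᵀ (nx A (vseq A k)) i0 = (vseq A k i0)⁻¹ * mulv Aᵀ (nx A (what A k)) i0 := by
    simp only [mulv]
    rw [Finset.mul_sum]
    exact Finset.sum_congr rfl fun l _ => by rw [e3 l]; ring
  have e5 : vseq A (k+1) j = vseq A (k+1) i0 * what A (k+1) j := what_scale hA (k+1) j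
  have e6 : vseq A (k+1) i0 = vseq A k i0 * (mulv Aᵀ (nx A (what A k)) i0)⁻¹ := by
    have h : vseq A (k+1) i0 = (mulv Aᵀ (nx A (vseq A k)) i0)⁻¹ := rfl
    rw [h, e4, mul_inv, inv_inv]
  rw [e3 i, e5, e6]
  have h1 : vseq A k i0 ≠ 0 := (hvk i0).ne'
  linear_combination (nx A (what A k) i * A i j * what A (k+1) j *
    (mulv Aᵀ (nx A (what A k)) i0)⁻¹) * mul_inv_cancel₀ h1

end SinkAux
end SinkAux

open SinkAux in
/-- **Sinkhorn iteration convergence.** For every real `n × n` matrix `θ`, the sequence of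
alternating row/column normalizations started from the entrywise exponential `exp θ` converges,
and its limit is a doubly stochastic matrix. -/
theorem sinkhornSeq_tendsto_doublyStochastic (n : ℕ) (θ : Matrix (Fin n) (Fin n) ℝ) :
    ∃ L : Matrix (Fin n) (Fin n) ℝ, L ∈ doublyStochastic ℝ (Fin n) ∧
      Filter.Tendsto (sinkhornSeq θ) Filter.atTop (nhds L) := by
  rcases Nat.eq_zero_or_pos n with rfl | hn
  · refine ⟨sinkhornSeq θ 0, ?_, ?_⟩
    · rw [mem_doublyStochastic_iff_sum]
      exact ⟨fun i => i.elim0, fun i => i.elim0, fun j => j.elim0⟩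
    · have h : sinkhornSeq θ = fun _ => sinkhornSeq θ 0 :=
        funext fun k => by ext i j; exact i.elim0
      rw [h]; exact tendsto_const_nhds
  haveI : NeZero n := ⟨hn.ne'⟩
  set A : Matrix (Fin n) (Fin n) ℝ := Matrix.of fun i j => Real.exp (θ i j) with hAdef
  have hApos : ∀ i j, 0 < A i j := fun i j => Real.exp_pos _
  obtain ⟨p0, -, hp0⟩ := Finset.exists_mem_eq_inf'
    (Finset.univ_nonempty (α := Fin n × Fin n)) (fun p => A p.1 p.2)
  set m := Finset.univ.inf' Finset.univ_nonempty (fun p : Fin n × Fin n => A p.1 p.2) with hmdef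
  set M := Finset.univ.sup' Finset.univ_nonempty (fun p : Fin n × Fin n => A p.1 p.2) with hMdef
  have hm : 0 < m := by rw [hp0]; exact hApos p0.1 p0.2
  have hAl : ∀ i j, m ≤ A i j := fun i j =>
    Finset.inf'_le (fun p : Fin n × Fin n => A p.1 p.2) (Finset.mem_univ (i,j))
  have hAu : ∀ i j, A i j ≤ M := fun i j =>
    Finset.le_sup' (fun p : Fin n × Fin n => A p.1 p.2) (Finset.mem_univ (i,j))
  have hmM : m ≤ M := (hAl i0 i0).trans (hAu i0 i0)
  have hM : 0 < M := lt_of_lt_of_le hm hmM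
  have hn1 : (1:ℝ) ≤ (n:ℝ) := by exact_mod_cast hn
  set r : ℝ := (1 - 2*(m^2/(2*M^2*n)))^2 with hrdef
  have hδpos : 0 < m^2/(2*M^2*n) := by positivity
  have hδhalf : m^2/(2*M^2*n) ≤ 1/2 := by
    rw [div_le_div_iff₀ (by positivity) (by norm_num)]
    nlinarith
  have hr0 : 0 ≤ r := sq_nonneg _
  have hr1 : r < 1 := by
    rw [hrdef]
    nlinarith
  have hKfacts : (1:ℝ) ≤ M/m := (one_le_div hm).mpr hmM
  have hCpos : (0:ℝ) ≤ (M/m)*(M/m - 1) := by nlinarith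
  -- the normalized scaling vectors form a Cauchy sequence
  have hdist : ∀ k, dist (what A k) (what A (k+1)) ≤ ((M/m)*(M/m - 1)) * r^k := by
    intro k
    have hrk : (0:ℝ) ≤ ((M/m)*(M/m - 1)) * r^k := by positivity
    rw [dist_pi_le_iff hrk]
    intro j
    rw [Real.dist_eq, abs_sub_comm]
    have h1 := what_dist hm hAl hAu k j
    have h2 := ratm_geom hm hAl hAu (A := A) k
    calc |what A (k+1) j - what A k j| ≤ (M/m) * ratm (vseq A (k+1)) (vseq A k) := h1
      _ ≤ (M/m) * ((M/m - 1) * r^k) := by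
          apply mul_le_mul_of_nonneg_left _ (by positivity)
          exact h2
      _ = ((M/m)*(M/m - 1)) * r^k := by ring
  obtain ⟨w, hw⟩ := cauchySeq_tendsto_of_complete
    (cauchySeq_of_le_geometric r _ hr1 hdist)
  have hwj : ∀ j, Filter.Tendsto (fun k => what A k j) Filter.atTop (nhds (w j)) :=
    fun j => tendsto_pi_nhds.mp hw j
  have hwlb : ∀ j, m/M ≤ w j := fun j =>
    ge_of_tendsto' (hwj j) (fun k => what_lb hm hAl hAu k j)
  have hwpos : Pos w := fun j => lt_of_lt_of_le (by positivity) (hwlb j)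
  have hnxw : Pos (nx A w) := nx_pos hApos hwpos
  have htpos : 0 < mulv Aᵀ (nx A w) i0 := mulv_pos (fun i j => hApos j i) hnxw i0
  set cstar : ℝ := (mulv Aᵀ (nx A w) i0)⁻¹ with hcdef
  have hcpos : 0 < cstar := inv_pos.mpr htpos
  set L : Matrix (Fin n) (Fin n) ℝ :=
    Matrix.of fun i j => cstar * (nx A w i * A i j * w j) with hLdef
  -- convergence of all the pieces
  have hmulv : ∀ i, Filter.Tendsto (fun k => mulv A (what A k) i) Filter.atTop
      (nhds (mulv A w i)) := by
    intro i
    exact tendsto_finset_sum _ (fun l _ => ((hwj l).const_mul (A i l)))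
  have hmulvpos : ∀ i, 0 < mulv A w i := mulv_pos hApos hwpos
  have hnx : ∀ i, Filter.Tendsto (fun k => nx A (what A k) i) Filter.atTop
      (nhds (nx A w i)) := fun i => ((hmulv i).inv₀ (hmulvpos i).ne')
  have ht : Filter.Tendsto (fun k => mulv Aᵀ (nx A (what A k)) i0) Filter.atTop
      (nhds (mulv Aᵀ (nx A w) i0)) :=
    tendsto_finset_sum _ (fun l _ => ((hnx l).const_mul (Aᵀ i0 l)))
  have hcs : Filter.Tendsto (fun k => (mulv Aᵀ (nx A (what A k)) i0)⁻¹) Filter.atTop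
      (nhds cstar) := ht.inv₀ htpos.ne'
  have hentry : ∀ i j, Filter.Tendsto (fun k => sinkhornSeq θ (k+1) i j) Filter.atTop
      (nhds (L i j)) := by
    intro i j
    have he : ∀ k, sinkhornSeq θ (k+1) i j
        = (mulv Aᵀ (nx A (what A k)) i0)⁻¹ * (nx A (what A k) i * A i j * what A (k+1) j) := by
      intro k
      have h1 : sinkhornSeq θ (k+1) i j = nx A (vseq A k) i * A i j * vseq A (k+1) j := by
        rw [sink_eq hAdef k]; rfl
      rw [h1, entry_eq hApos k i j]
    have hshift : Filter.Tendsto (fun k => what A (k+1) j) Filter.atTop (nhds (w j)) :=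
      (hwj j).comp (Filter.tendsto_add_atTop_nat 1)
    have hlim : Filter.Tendsto
        (fun k => (mulv Aᵀ (nx A (what A k)) i0)⁻¹ * (nx A (what A k) i * A i j * what A (k+1) j))
        Filter.atTop (nhds (cstar * (nx A w i * A i j * w j))) :=
      hcs.mul (((hnx i).mul tendsto_const_nhds).mul hshift)
    have hLij : L i j = cstar * (nx A w i * A i j * w j) := rfl
    rw [hLij]
    exact hlim.congr (fun k => (he k).symm)
  have hT1 : Filter.Tendsto (fun k => sinkhornSeq θ (k+1)) Filter.atTop (nhds L) := by
    refine tendsto_pi_nhds.mpr ?_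
    intro i
    rw [tendsto_pi_nhds]
    intro j
    exact hentry i j
  have hT : Filter.Tendsto (sinkhornSeq θ) Filter.atTop (nhds L) :=
    (Filter.tendsto_add_atTop_iff_nat 1).mp hT1
  -- column sums of the limit are 1
  have hcol1 : ∀ j, ∑ i, L i j = 1 := by
    intro j
    have hTc : Filter.Tendsto (fun k => ∑ i, sinkhornSeq θ (k+1) i j) Filter.atTop
        (nhds (∑ i, L i j)) := tendsto_finset_sum _ (fun i _ => hentry i j)
    have hconst : ∀ k, ∑ i, sinkhornSeq θ (k+1) i j = 1 := by
      intro k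
      have h1 : ∀ i, sinkhornSeq θ (k+1) i j = nx A (vseq A k) i * A i j * vseq A (k+1) j := by
        intro i; rw [sink_eq hAdef k]; rfl
      rw [Finset.sum_congr rfl (fun i _ => h1 i)]
      exact colsum_one hApos k j
    have hTc' : Filter.Tendsto (fun k => ∑ i, sinkhornSeq θ (k+1) i j) Filter.atTop (nhds 1) := by
      rw [show (fun k => ∑ i, sinkhornSeq θ (k+1) i j) = fun _ => (1:ℝ) from funext hconst]
      exact tendsto_const_nhds
    exact tendsto_nhds_unique hTc hTc'
  -- row sums of the limit all equal cstar
  have hrow : ∀ i, ∑ j, L i j = cstar := by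
    intro i
    have h1 : ∀ j, L i j = (cstar * nx A w i) * (A i j * w j) := fun j => by
      show cstar * (nx A w i * A i j * w j) = _
      ring
    rw [Finset.sum_congr rfl (fun j _ => h1 j), ← Finset.mul_sum]
    have h2 : (∑ j, A i j * w j) = mulv A w i := rfl
    rw [h2]
    have h3 : nx A w i * mulv A w i = 1 := inv_mul_cancel₀ (hmulvpos i).ne'
    calc cstar * nx A w i * mulv A w i = cstar * (nx A w i * mulv A w i) := by ring
      _ = cstar := by rw [h3, mul_one]
  -- cstar must be 1
  have hcs1 : cstar = 1 := by
    have h1 : ∑ i, ∑ j, L i j = (n:ℝ) * cstar := by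
      rw [Finset.sum_congr rfl (fun i _ => hrow i), Finset.sum_const, Finset.card_univ,
        Fintype.card_fin, nsmul_eq_mul]
    have h2 : ∑ j : Fin n, ∑ i, L i j = (n:ℝ) := by
      rw [Finset.sum_congr rfl (fun j _ => hcol1 j), Finset.sum_const, Finset.card_univ,
        Fintype.card_fin, nsmul_eq_mul, mul_one]
    have h3 : ∑ i, ∑ j, L i j = ∑ j : Fin n, ∑ i, L i j := Finset.sum_comm
    have hn0 : (n:ℝ) ≠ 0 := by positivity
    have : (n:ℝ) * cstar = (n:ℝ) * 1 := by rw [mul_one]; rw [← h1, h3, h2]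
    exact mul_left_cancel₀ hn0 this
  refine ⟨L, ?_, hT⟩
  rw [mem_doublyStochastic_iff_sum]
  refine ⟨fun i j => ?_, fun i => by rw [hrow i, hcs1], hcol1⟩
  have : 0 < L i j := by
    have : L i j = cstar * (nx A w i * A i j * w j) := rfl
    rw [this]
    exact mul_pos hcpos (mul_pos (mul_pos (hnxw i) (hApos i j)) (hwpos j))
  exact this.le
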